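/- Let A_1, …, A_{m−1} be a skew Clifford system on ℝ^{n+1} and let F(x,y) = ⟨x,y⟩² + Σ_{q=1}^{m−1} ⟨A_q x, y⟩². Then for all x, y ∈ ℝ^{n+1}: the gradient of F in the x-variable equals 2⟨x,y⟩ y + 2 Σ_{q=1}^{m−1} ⟨A_q x, y⟩ A_qᵀ y, its squared norm equals 4 F(x,y) ‖y‖², the squared norm of the gradient of F in the y-variable equals 4 F(x,y) ‖x‖², and consequently the squared norm of the full Euclidean gradient of F at (x,y) equals 4 F(x,y)(‖x‖² + ‖y‖²). -/

import Mathlib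

open Matrix
open scoped RealInnerProductSpace BigOperators

noncomputable section

/-- A skew Clifford system `A_1, …, A_{m-1}` on `ℝ^N`: skew-symmetric matrices with
`A_p A_q + A_q A_p = -2 δ_{pq} Id`. -/
def IsSkewCliffordSystem {N m : ℕ} (A : Fin (m - 1) → Matrix (Fin N) (Fin N) ℝ) : Prop :=
  (∀ p q, A p * A q + A q * A p =
      if p = q then (-2 : ℝ) • (1 : Matrix (Fin N) (Fin N) ℝ) else 0) ∧
  (∀ p, (A p)ᵀ = -A p)

/-- The action of a matrix on Euclidean space. -/
def act {N : ℕ} (A : Matrix (Fin N) (Fin N) ℝ) (x : EuclideanSpace ℝ (Fin N)) :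
    EuclideanSpace ℝ (Fin N) :=
  Matrix.toEuclideanLin A x

/-- The splitting form of the FKM isoparametric polynomial:
`F(x,y) = ⟨x,y⟩² + Σ_q ⟨A_q x, y⟩²`. -/
def FKM {N m : ℕ} (A : Fin (m - 1) → Matrix (Fin N) (Fin N) ℝ)
    (x y : EuclideanSpace ℝ (Fin N)) : ℝ :=
  ⟪x, y⟫ ^ 2 + ∑ q, ⟪act (A q) x, y⟫ ^ 2

variable {N : ℕ}

lemma act_inner (M : Matrix (Fin N) (Fin N) ℝ) (u v : EuclideanSpace ℝ (Fin N)) :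
    ⟪act M u, v⟫ = ⟪u, act Mᵀ v⟫ := by
  simp only [act, PiLp.inner_apply, RCLike.inner_apply, starRingEnd_apply, star_trivial,
    Matrix.toEuclideanLin_apply]
  simp only [PiLp.toLp_apply, Matrix.mulVec, dotProduct, Matrix.transpose_apply, WithLp.equiv_apply,
    Finset.sum_mul, Finset.mul_sum]
  rw [Finset.sum_comm]
  congr 1; ext i; congr 1; ext j; ring

lemma act_mul (M P : Matrix (Fin N) (Fin N) ℝ) (u : EuclideanSpace ℝ (Fin N)) :
    act (M * P) u = act M (act P u) := by
  simp [act, Matrix.toEuclideanLin_apply, Matrix.mulVec_mulVec]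

lemma act_one (u : EuclideanSpace ℝ (Fin N)) : act (1 : Matrix (Fin N) (Fin N) ℝ) u = u := by
  simp [act, Matrix.toEuclideanLin_apply, Matrix.one_mulVec]

lemma act_neg (M : Matrix (Fin N) (Fin N) ℝ) (u : EuclideanSpace ℝ (Fin N)) :
    act (-M) u = -act M u := by
  simp [act]

example : True := trivial

lemma ortho_skew {M : Matrix (Fin N) (Fin N) ℝ} (hM : Mᵀ = -M)
    (v : EuclideanSpace ℝ (Fin N)) : ⟪v, act M v⟫ = 0 := by
  have h1 : ⟪v, act M v⟫ = ⟪act M v, v⟫ := real_inner_comm _ _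
  have h2 : ⟪act M v, v⟫ = ⟪v, act Mᵀ v⟫ := act_inner M v v
  rw [hM, act_neg, inner_neg_right] at h2
  linarith [h1.trans h2]

lemma ortho_pair {m : ℕ} {A : Fin (m-1) → Matrix (Fin N) (Fin N) ℝ}
    (hA : (∀ p q, A p * A q + A q * A p =
      if p = q then (-2 : ℝ) • (1 : Matrix (Fin N) (Fin N) ℝ) else 0) ∧
      (∀ p, (A p)ᵀ = -A p))
    (p q : Fin (m-1)) (v : EuclideanSpace ℝ (Fin N)) :
    ⟪act (A p) v, act (A q) v⟫ = if p = q then ‖v‖^2 else 0 := by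
  have key : ∀ p q : Fin (m-1), ⟪act (A p) v, act (A q) v⟫ = -⟪v, act (A p * A q) v⟫ := by
    intro p q
    rw [act_inner, hA.2 p, act_neg, inner_neg_right, ← act_mul]
  have h2 : (2:ℝ) * ⟪act (A p) v, act (A q) v⟫ = -⟪v, act (A p * A q + A q * A p) v⟫ := by
    have hsymm : ⟪act (A p) v, act (A q) v⟫ = ⟪act (A q) v, act (A p) v⟫ := real_inner_comm _ _
    have e1 := key p q
    have e2 := key q p
    have hadd : act (A p * A q + A q * A p) v = act (A p * A q) v + act (A q * A p) v := by
      simp [act, map_add]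
    rw [hadd, inner_add_right]
    linarith [hsymm, e1, e2]
  rw [hA.1 p q] at h2
  by_cases hpq : p = q
  · simp only [hpq, if_true] at h2 ⊢
    have : act ((-2 : ℝ) • (1 : Matrix (Fin N) (Fin N) ℝ)) v = (-2 : ℝ) • v := by
      simp [act, Matrix.toEuclideanLin_apply, Matrix.smul_mulVec, Matrix.one_mulVec]
    rw [this, inner_smul_right] at h2
    have hvv := real_inner_self_eq_norm_sq v
    linarith
  · simp only [hpq, if_false] at h2 ⊢
    have : act (0 : Matrix (Fin N) (Fin N) ℝ) v = 0 := by simp [act]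
    rw [this, inner_zero_right] at h2
    linarith

lemma key_norm {k : ℕ} (a : EuclideanSpace ℝ (Fin N)) (w : Fin k → EuclideanSpace ℝ (Fin N))
    (c0 : ℝ) (c : Fin k → ℝ)
    (hw0 : ∀ q, ⟪a, w q⟫ = 0)
    (hww : ∀ p q, ⟪w p, w q⟫ = if p = q then ‖a‖^2 else 0) :
    ‖(2*c0) • a + ∑ q, (2*c q) • w q‖^2 = 4*(c0^2 + ∑ q, (c q)^2) * ‖a‖^2 := by
  have expand : ∀ u : EuclideanSpace ℝ (Fin N), ‖u‖^2 = ⟪u, u⟫ :=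
    fun u => (real_inner_self_eq_norm_sq u).symm
  rw [expand]
  rw [inner_add_add_self]
  have h1 : ⟪(2*c0) • a, (2*c0) • a⟫ = 4*c0^2*‖a‖^2 := by
    rw [real_inner_smul_left, real_inner_smul_right, real_inner_self_eq_norm_sq]; ring
  have h2 : ⟪(2*c0) • a, ∑ q, (2*c q) • w q⟫ = 0 := by
    rw [inner_sum]
    apply Finset.sum_eq_zero
    intro q _
    rw [real_inner_smul_left, real_inner_smul_right, hw0 q]; ring
  have h3 : ⟪∑ q, (2*c q) • w q, ∑ q, (2*c q) • w q⟫ = ∑ q, 4*(c q)^2*‖a‖^2 := by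
    rw [sum_inner]
    apply Finset.sum_congr rfl
    intro p _
    rw [real_inner_smul_left, inner_sum]
    have : ∑ q, ⟪w p, (2*c q) • w q⟫ = 2 * c p * ‖a‖^2 := by
      have : ∀ q ∈ Finset.univ, ⟪w p, (2*c q) • w q⟫
          = if q = p then 2 * c p * ‖a‖^2 else 0 := by
        intro q _
        rw [real_inner_smul_right, hww p q]
        by_cases h : p = q
        · subst h; simp
        · simp [h, Ne.symm h]
      rw [Finset.sum_congr rfl this, Finset.sum_ite_eq' Finset.univ p]
      simp
    rw [this]; ring
  have h2' : ⟪∑ q, (2*c q) • w q, (2*c0) • a⟫ = 0 := by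
    rw [real_inner_comm]; exact h2
  have hs : ∑ q, 4*(c q)^2*‖a‖^2 = 4*(∑ q, (c q)^2)*‖a‖^2 := by
    rw [Finset.mul_sum, Finset.sum_mul]
  rw [h1, h2, h2', h3]
  linarith [hs]

lemma hasGradientAt_inner_sq (v x : EuclideanSpace ℝ (Fin N)) :
    HasGradientAt (fun t => ⟪t, v⟫^2) ((2*⟪x,v⟫) • v) x := by
  rw [hasGradientAt_iff_hasFDerivAt]
  have h1 : HasFDerivAt (fun t : EuclideanSpace ℝ (Fin N) => ⟪v, t⟫) (innerSL ℝ v) x :=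
    (innerSL ℝ v).hasFDerivAt
  have h2 := h1.fun_mul h1
  have heq : (fun t : EuclideanSpace ℝ (Fin N) => ⟪t, v⟫^2) = fun t => ⟪v,t⟫ * ⟪v,t⟫ := by
    funext t; rw [real_inner_comm]; ring
  rw [heq]
  refine h2.congr_fderiv (Eq.symm ?_)
  ext t
  simp only [InnerProductSpace.toDual_apply_apply, ContinuousLinearMap.add_apply,
    ContinuousLinearMap.smul_apply, innerSL_apply_apply, inner_smul_left, RCLike.star_def,
    starRingEnd_apply, star_trivial, smul_eq_mul]
  rw [real_inner_comm x v]
  ring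

lemma hasGradientAt_sum_form {k : ℕ} (a : EuclideanSpace ℝ (Fin N))
    (w : Fin k → EuclideanSpace ℝ (Fin N)) (x : EuclideanSpace ℝ (Fin N)) :
    HasGradientAt (fun t => ⟪t, a⟫^2 + ∑ q, ⟪t, w q⟫^2)
      ((2*⟪x,a⟫) • a + ∑ q, (2*⟪x, w q⟫) • w q) x := by
  rw [hasGradientAt_iff_hasFDerivAt, map_add, map_sum]
  exact ((hasGradientAt_inner_sq a x).hasFDerivAt).add
    (HasFDerivAt.fun_sum fun q _ => (hasGradientAt_inner_sq (w q) x).hasFDerivAt)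

section Prod
variable {N : ℕ}
local notation "E" => EuclideanSpace ℝ (Fin N)

def Pfst : WithLp 2 (EuclideanSpace ℝ (Fin N) × EuclideanSpace ℝ (Fin N)) →L[ℝ]
    EuclideanSpace ℝ (Fin N) :=
  (ContinuousLinearMap.fst ℝ _ _).comp
    (WithLp.prodContinuousLinearEquiv 2 ℝ _ _).toContinuousLinearMap

def Psnd : WithLp 2 (EuclideanSpace ℝ (Fin N) × EuclideanSpace ℝ (Fin N)) →L[ℝ]
    EuclideanSpace ℝ (Fin N) :=
  (ContinuousLinearMap.snd ℝ _ _).comp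
    (WithLp.prodContinuousLinearEquiv 2 ℝ _ _).toContinuousLinearMap

lemma Pfst_apply (z : WithLp 2 (EuclideanSpace ℝ (Fin N) × EuclideanSpace ℝ (Fin N))) :
    Pfst z = (WithLp.equiv 2 _ z).1 := rfl

lemma Psnd_apply (z : WithLp 2 (EuclideanSpace ℝ (Fin N) × EuclideanSpace ℝ (Fin N))) :
    Psnd z = (WithLp.equiv 2 _ z).2 := rfl

lemma hasFDerivAt_prod_term (M : Matrix (Fin N) (Fin N) ℝ) (x y : EuclideanSpace ℝ (Fin N)) :
    HasFDerivAt (fun z : WithLp 2 (EuclideanSpace ℝ (Fin N) × EuclideanSpace ℝ (Fin N)) =>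
        ⟪act M (WithLp.equiv 2 _ z).1, (WithLp.equiv 2 _ z).2⟫^2)
      ((InnerProductSpace.toDual ℝ _)
        ((WithLp.equiv 2 (EuclideanSpace ℝ (Fin N) × EuclideanSpace ℝ (Fin N))).symm
          ((2*⟪act M x, y⟫) • act Mᵀ y, (2*⟪act M x, y⟫) • act M x)))
      ((WithLp.equiv 2 _).symm (x, y)) := by
  classical
  set T : EuclideanSpace ℝ (Fin N) →L[ℝ] EuclideanSpace ℝ (Fin N) :=
    LinearMap.toContinuousLinearMap (Matrix.toEuclideanLin M) with hT
  set z0 := (WithLp.equiv 2 (EuclideanSpace ℝ (Fin N) × EuclideanSpace ℝ (Fin N))).symm (x, y)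
  have hu : HasFDerivAt (fun z : WithLp 2 (EuclideanSpace ℝ (Fin N) × EuclideanSpace ℝ (Fin N)) =>
      act M (WithLp.equiv 2 _ z).1) (T.comp Pfst) z0 := (T.comp Pfst).hasFDerivAt
  have hv : HasFDerivAt (fun z : WithLp 2 (EuclideanSpace ℝ (Fin N) × EuclideanSpace ℝ (Fin N)) =>
      (WithLp.equiv 2 _ z).2) Psnd z0 := Psnd.hasFDerivAt
  have hi := hu.inner ℝ hv
  have hsq := hi.fun_mul hi
  have heq : (fun z : WithLp 2 (EuclideanSpace ℝ (Fin N) × EuclideanSpace ℝ (Fin N)) =>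
      ⟪act M (WithLp.equiv 2 _ z).1, (WithLp.equiv 2 _ z).2⟫^2)
      = fun z => ⟪act M (WithLp.equiv 2 _ z).1, (WithLp.equiv 2 _ z).2⟫ *
        ⟪act M (WithLp.equiv 2 _ z).1, (WithLp.equiv 2 _ z).2⟫ := by
    funext z; ring
  rw [heq]
  refine hsq.congr_fderiv (Eq.symm ?_)
  ext h
  simp only [InnerProductSpace.toDual_apply_apply, ContinuousLinearMap.add_apply,
    ContinuousLinearMap.smul_apply, ContinuousLinearMap.comp_apply,
    fderivInnerCLM_apply, ContinuousLinearMap.prod_apply, smul_eq_mul]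
  have hTa : ∀ a : EuclideanSpace ℝ (Fin N), T a = act M a := fun a => rfl
  simp only [z0, Equiv.apply_symm_apply, WithLp.prod_inner_apply, WithLp.equiv_symm_apply, WithLp.toLp_fst,
    WithLp.toLp_snd, inner_smul_left, RCLike.star_def, starRingEnd_apply, star_trivial,
    Pfst_apply, Psnd_apply, WithLp.equiv_apply, WithLp.ofLp_fst, WithLp.ofLp_snd, hTa]
  have hc : ⟪act M h.fst, y⟫ = ⟪act Mᵀ y, h.fst⟫ := by rw [act_inner, real_inner_comm]
  rw [hc]; ring

end Prod

/-- the gradient of `F` in the `x`-variable equals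
`2⟨x,y⟩ y + 2 Σ_q ⟨A_q x, y⟩ A_qᵀ y`, its squared norm equals `4 F(x,y) ‖y‖²`, the
squared norm of the gradient of `F` in the `y`-variable equals `4 F(x,y) ‖x‖²`, and
the squared norm of the full Euclidean gradient of `F` at `(x,y)` equals
`4 F(x,y) (‖x‖² + ‖y‖²)`. -/
theorem stmt1 (n m : ℕ) (hn : 1 ≤ n) (hm : 1 ≤ m)
    (A : Fin (m - 1) → Matrix (Fin (n + 1)) (Fin (n + 1)) ℝ)
    (hA : IsSkewCliffordSystem A)
    (x y : EuclideanSpace ℝ (Fin (n + 1))) :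
    gradient (fun x' => FKM A x' y) x =
        (2 * ⟪x, y⟫) • y + ∑ q, (2 * ⟪act (A q) x, y⟫) • act (A q)ᵀ y ∧
    ‖gradient (fun x' => FKM A x' y) x‖ ^ 2 = 4 * FKM A x y * ‖y‖ ^ 2 ∧
    ‖gradient (fun y' => FKM A x y') y‖ ^ 2 = 4 * FKM A x y * ‖x‖ ^ 2 ∧
    ‖gradient
        (fun z : WithLp 2 (EuclideanSpace ℝ (Fin (n + 1)) × EuclideanSpace ℝ (Fin (n + 1))) =>
          FKM A (WithLp.equiv 2 _ z).1 (WithLp.equiv 2 _ z).2)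
        ((WithLp.equiv 2 _).symm (x, y))‖ ^ 2 =
      4 * FKM A x y * (‖x‖ ^ 2 + ‖y‖ ^ 2) := by
  obtain ⟨hA1, hA2⟩ := hA
  have hco : ∀ (x' : EuclideanSpace ℝ (Fin (n+1))) q,
      ⟪act (A q) x', y⟫ = ⟪x', act (A q)ᵀ y⟫ := fun x' q => act_inner _ _ _
  have e1 : (fun x' => FKM A x' y) = fun x' : EuclideanSpace ℝ (Fin (n+1)) =>
      ⟪x', y⟫ ^ 2 + ∑ q, ⟪x', act (A q)ᵀ y⟫ ^ 2 := by
    funext x'; simp only [FKM]; congr 1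
    exact Finset.sum_congr rfl fun q _ => by rw [hco]
  have hgx := hasGradientAt_sum_form y (fun q => act (A q)ᵀ y) x
  rw [← e1] at hgx
  have part1 : gradient (fun x' => FKM A x' y) x
      = (2 * ⟪x, y⟫) • y + ∑ q, (2 * ⟪act (A q) x, y⟫) • act (A q)ᵀ y := by
    rw [hgx.gradient]; congr 1
    exact Finset.sum_congr rfl fun q _ => by rw [hco]
  have e3 : (fun y' => FKM A x y') = fun y' : EuclideanSpace ℝ (Fin (n+1)) =>
      ⟪y', x⟫ ^ 2 + ∑ q, ⟪y', act (A q) x⟫ ^ 2 := by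
    funext y'; simp only [FKM]
    rw [real_inner_comm x y']
    congr 1
    exact Finset.sum_congr rfl fun q _ => by rw [real_inner_comm]
  have hgy := hasGradientAt_sum_form x (fun q => act (A q) x) y
  rw [← e3] at hgy
  have part3g : gradient (fun y' => FKM A x y') y
      = (2 * ⟪x, y⟫) • x + ∑ q, (2 * ⟪act (A q) x, y⟫) • act (A q) x := by
    rw [hgy.gradient, real_inner_comm y x]
    congr 1
    exact Finset.sum_congr rfl fun q _ => by rw [real_inner_comm]
  have hw0x : ∀ q, ⟪y, act (A q)ᵀ y⟫ = 0 := fun q =>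
    ortho_skew (by rw [Matrix.transpose_transpose, hA2 q, neg_neg]) y
  have hwwx : ∀ p q, ⟪act (A p)ᵀ y, act (A q)ᵀ y⟫ = if p = q then ‖y‖^2 else 0 := by
    intro p q
    rw [hA2 p, hA2 q, act_neg, act_neg, inner_neg_neg]
    exact ortho_pair ⟨hA1, hA2⟩ p q y
  have hw0y : ∀ q, ⟪x, act (A q) x⟫ = 0 := fun q => ortho_skew (hA2 q) x
  have hwwy : ∀ p q, ⟪act (A p) x, act (A q) x⟫ = if p = q then ‖x‖^2 else 0 :=
    fun p q => ortho_pair ⟨hA1, hA2⟩ p q x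
  have hF : FKM A x y = ⟪x,y⟫^2 + ∑ q, ⟪act (A q) x, y⟫^2 := rfl
  have n2 : ‖(2 * ⟪x, y⟫) • y + ∑ q, (2 * ⟪act (A q) x, y⟫) • act (A q)ᵀ y‖^2
      = 4 * FKM A x y * ‖y‖^2 := by
    rw [hF]
    exact key_norm y (fun q => act (A q)ᵀ y) ⟪x,y⟫ (fun q => ⟪act (A q) x, y⟫) hw0x hwwx
  have n3 : ‖(2 * ⟪x, y⟫) • x + ∑ q, (2 * ⟪act (A q) x, y⟫) • act (A q) x‖^2
      = 4 * FKM A x y * ‖x‖^2 := by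
    rw [hF]
    exact key_norm x (fun q => act (A q) x) ⟪x,y⟫ (fun q => ⟪act (A q) x, y⟫) hw0y hwwy
  refine ⟨part1, by rw [part1]; exact n2, by rw [part3g]; exact n3, ?_⟩
  -- part 4
  have hf1 := hasFDerivAt_prod_term (N := n+1) 1 x y
  simp only [Matrix.transpose_one, act_one] at hf1
  have hsum := hf1.add
    (HasFDerivAt.fun_sum fun q (_ : q ∈ Finset.univ) => hasFDerivAt_prod_term (A q) x y)
  have hD : (InnerProductSpace.toDual ℝ
        (WithLp 2 (EuclideanSpace ℝ (Fin (n+1)) × EuclideanSpace ℝ (Fin (n+1)))))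
      ((WithLp.equiv 2 _).symm
        ((2 * ⟪x, y⟫) • y + ∑ q, (2 * ⟪act (A q) x, y⟫) • act (A q)ᵀ y,
         (2 * ⟪x, y⟫) • x + ∑ q, (2 * ⟪act (A q) x, y⟫) • act (A q) x)) =
      (InnerProductSpace.toDual ℝ _) ((WithLp.equiv 2 _).symm
          ((2*⟪x,y⟫) • y, (2*⟪x,y⟫) • x))
      + ∑ q, (InnerProductSpace.toDual ℝ _) ((WithLp.equiv 2 _).symm
          ((2*⟪act (A q) x, y⟫) • act (A q)ᵀ y, (2*⟪act (A q) x, y⟫) • act (A q) x)) := by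
    ext h
    simp only [InnerProductSpace.toDual_apply_apply, ContinuousLinearMap.add_apply,
      ContinuousLinearMap.sum_apply, WithLp.prod_inner_apply, WithLp.equiv_symm_apply, WithLp.toLp_fst,
      WithLp.toLp_snd, inner_add_left, sum_inner]
    rw [Finset.sum_add_distrib]; ring
  have hgrad4 : HasGradientAt
      (fun z : WithLp 2 (EuclideanSpace ℝ (Fin (n + 1)) × EuclideanSpace ℝ (Fin (n + 1))) =>
          FKM A (WithLp.equiv 2 _ z).1 (WithLp.equiv 2 _ z).2)
      ((WithLp.equiv 2 _).symm
        ((2 * ⟪x, y⟫) • y + ∑ q, (2 * ⟪act (A q) x, y⟫) • act (A q)ᵀ y,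
         (2 * ⟪x, y⟫) • x + ∑ q, (2 * ⟪act (A q) x, y⟫) • act (A q) x))
      ((WithLp.equiv 2 _).symm (x, y)) := by
    rw [hasGradientAt_iff_hasFDerivAt, hD]
    exact hsum
  rw [hgrad4.gradient, WithLp.prod_norm_sq_eq_of_L2, WithLp.equiv_symm_apply, WithLp.toLp_fst,
    WithLp.toLp_snd]
  rw [n2, n3]
  ring
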